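/- Let A, B : [x_0, ∞) → ℝ be convex functions, with B differentiable and satisfying B'(x+1) = B'(x) + O(1) as x → ∞. Suppose there is an increasing sequence (x_k) with x_k → ∞, x_{k+1} = x_k + O(1), and A(x_k) = B(x_k) + O(1) as k → ∞. Then A(x) = B(x) + O(1) as x → ∞. -/

import Mathlib

open Filter

private lemma tangent_left' {x0 : ℝ} {f : ℝ → ℝ} (hf : ConvexOn ℝ (Set.Ici x0) f)
    {u p t : ℝ} (hu : u ∈ Set.Ici x0) (hp : p ∈ Set.Ici x0) (ht : t ∈ Set.Ici x0)
    (hup : u < p) (hpt : p ≤ t) :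
    f p + (f p - f u) / (p - u) * (t - p) ≤ f t := by
  rcases eq_or_lt_of_le hpt with rfl | hpt'
  · simp
  · have h := hf.slope_mono_adjacent hu ht hup hpt'
    have h2 : (f p - f u) / (p - u) * (t - p) ≤ f t - f p := by
      calc (f p - f u) / (p - u) * (t - p) ≤ (f t - f p) / (t - p) * (t - p) :=
            mul_le_mul_of_nonneg_right h (by linarith)
        _ = f t - f p := div_mul_cancel₀ _ (sub_pos.2 hpt').ne'
    linarith

private lemma tangent_right' {x0 : ℝ} {f : ℝ → ℝ} (hf : ConvexOn ℝ (Set.Ici x0) f)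
    {t q v : ℝ} (ht : t ∈ Set.Ici x0) (hq : q ∈ Set.Ici x0) (hv : v ∈ Set.Ici x0)
    (htq : t ≤ q) (hqv : q < v) :
    f q + (f v - f q) / (v - q) * (t - q) ≤ f t := by
  rcases eq_or_lt_of_le htq with rfl | htq'
  · simp
  · have h := hf.slope_mono_adjacent ht hv htq' hqv
    have h2 : f q - f t ≤ (f v - f q) / (v - q) * (q - t) := by
      calc f q - f t = (f q - f t) / (q - t) * (q - t) :=
            (div_mul_cancel₀ _ (sub_pos.2 htq').ne').symm
        _ ≤ (f v - f q) / (v - q) * (q - t) := mul_le_mul_of_nonneg_right h (by linarith)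
    have e : (f v - f q) / (v - q) * (t - q) = -((f v - f q) / (v - q) * (q - t)) := by ring
    linarith [h2, e.le, e.ge]

private lemma tangent_deriv {x0 : ℝ} {B : ℝ → ℝ} (hB : ConvexOn ℝ (Set.Ici x0) B)
    (hBdiff : ∀ y ∈ Set.Ici x0, DifferentiableAt ℝ B y)
    {a t : ℝ} (ha : a ∈ Set.Ici x0) (ht : t ∈ Set.Ici x0) :
    B a + deriv B a * (t - a) ≤ B t := by
  rcases lt_trichotomy a t with h | rfl | h
  · have h1 := hB.deriv_le_slope ha ht h (hBdiff a ha)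
    rw [slope_def_field] at h1
    have h2 := mul_le_mul_of_nonneg_right h1 (le_of_lt (sub_pos.2 h))
    rw [div_mul_cancel₀ _ (sub_pos.2 h).ne'] at h2
    linarith
  · simp
  · have h1 := hB.slope_le_deriv ht ha h (hBdiff a ha)
    rw [slope_def_field] at h1
    have h2 := mul_le_mul_of_nonneg_right h1 (le_of_lt (sub_pos.2 h))
    rw [div_mul_cancel₀ _ (sub_pos.2 h).ne'] at h2
    have e : deriv B a * (t - a) = -(deriv B a * (a - t)) := by ring
    linarith [e.le, e.ge]

set_option maxHeartbeats 1000000 in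
/-- If `A`, `B` are convex on `[x₀,∞)`, `B` is differentiable with `B'(x+1) = B'(x) + O(1)`,
and `A(x_k) = B(x_k) + O(1)` along an increasing sequence `x_k → ∞` with bounded gaps,
then `A(x) = B(x) + O(1)` as `x → ∞`. -/
theorem convex_compare_O1 (x0 : ℝ) (A B : ℝ → ℝ)
    (hA : ConvexOn ℝ (Set.Ici x0) A) (hB : ConvexOn ℝ (Set.Ici x0) B)
    (hBdiff : ∀ x ∈ Set.Ici x0, DifferentiableAt ℝ B x)
    (C1 : ℝ) (hC1 : ∀ᶠ x in atTop, |deriv B (x + 1) - deriv B x| ≤ C1)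
    (x : ℕ → ℝ) (hx0 : ∀ k, x k ∈ Set.Ici x0)
    (hmono : StrictMono x) (hx : Tendsto x atTop atTop)
    (C2 : ℝ) (hstep : ∀ k, x (k + 1) - x k ≤ C2)
    (C3 : ℝ) (hAB : ∀ᶠ k in atTop, |A (x k) - B (x k)| ≤ C3) :
    ∃ C : ℝ, ∀ᶠ t in atTop, |A t - B t| ≤ C := by
  obtain ⟨T0, hT0⟩ := eventually_atTop.1 hC1
  obtain ⟨N1, hN1⟩ := eventually_atTop.1 hAB
  have hC3 : (0:ℝ) ≤ C3 := le_trans (abs_nonneg _) (hN1 N1 le_rfl)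
  have hC1nn : (0:ℝ) ≤ C1 := le_trans (abs_nonneg _) (hT0 T0 le_rfl)
  have hC2pos : (0:ℝ) < C2 :=
    lt_of_lt_of_le (sub_pos.2 (hmono (Nat.lt_succ_self 0))) (hstep 0)
  set n : ℕ := ⌈2 + 3*C2⌉₊ with hndef
  have hnge : 2 + 3*C2 ≤ (n:ℝ) := Nat.le_ceil _
  have hmonoD : MonotoneOn (deriv B) (Set.Ici x0) := hB.monotoneOn_deriv hBdiff
  have hstepn : ∀ a : ℝ, T0 ≤ a → ∀ i : ℕ, deriv B (a + i) ≤ deriv B a + i * C1 := by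
    intro a hTa i
    induction i with
    | zero => simp
    | succ i ih =>
      have hi0 : (0:ℝ) ≤ i := Nat.cast_nonneg i
      have h := (abs_le.1 (hT0 (a + i) (by linarith))).2
      rw [show ((i+1:ℕ):ℝ) = (i:ℝ)+1 from by push_cast; ring,
        show a + ((i:ℝ)+1) = (a + i) + 1 from by ring]
      linarith
  have hinc : ∀ a b : ℝ, T0 ≤ a → x0 ≤ a → a ≤ b → b ≤ a + (n:ℝ) →
      deriv B b - deriv B a ≤ (n:ℝ) * C1 := by
    intro a b hTa hxa hab hbn
    have hn0 : (0:ℝ) ≤ n := Nat.cast_nonneg n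
    have h1 : deriv B b ≤ deriv B (a + (n:ℝ)) :=
      hmonoD (Set.mem_Ici.2 (hxa.trans hab)) (Set.mem_Ici.2 (by linarith)) hbn
    have h2 := hstepn a hTa n
    linarith
  have hux : ∀ c : ℝ, ∃ i, c ≤ x i := fun c => (hx.eventually_ge_atTop c).exists
  obtain ⟨N2, hN2⟩ := hux (max T0 x0)
  have hxN : max T0 x0 ≤ x (max N1 N2) := le_trans hN2 (hmono.monotone (le_max_right N1 N2))
  obtain ⟨M, hM⟩ := hux (x (max N1 N2) + 1)
  refine ⟨C3 + C2 * (4*C3 + (n:ℝ) * C1), ?_⟩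
  filter_upwards [eventually_ge_atTop (x M)] with t ht
  -- locate t between consecutive points
  have hex1 : ∃ i, t < x i := (hx.eventually_gt_atTop t).exists
  have hf1 : Nat.find hex1 ≠ 0 := by
    intro h
    have h0 := Nat.find_spec hex1
    rw [h] at h0
    exact absurd h0 (not_lt.2 (le_trans (hmono.monotone (Nat.zero_le M)) ht))
  obtain ⟨k, hk⟩ := Nat.exists_eq_succ_of_ne_zero hf1
  have htq : t < x (k+1) := by have := Nat.find_spec hex1; rwa [hk] at this
  have hpt : x k ≤ t :=
    not_lt.1 (Nat.find_min hex1 (show k < Nat.find hex1 by rw [hk]; exact Nat.lt_succ_self k))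
  have hMk1 : M < k + 1 := hmono.lt_iff_lt.1 (lt_of_le_of_lt ht htq)
  have hMk : x M ≤ x k := hmono.monotone (Nat.lt_succ_iff.1 hMk1)
  have hpN : x (max N1 N2) + 1 ≤ x k := le_trans hM hMk
  have hNk : max N1 N2 < k := hmono.lt_iff_lt.1 (by linarith)
  have hpq : x k < x (k+1) := hmono (Nat.lt_succ_self k)
  have hΔ : (0:ℝ) < x (k+1) - x k := sub_pos.2 hpq
  -- locate j below
  have hex2 : ∃ i, x k - 1 < x i := ⟨k, by linarith⟩
  have hf2 : Nat.find hex2 ≠ 0 := by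
    intro h
    have h0 := Nat.find_spec hex2
    rw [h] at h0
    have h1 : x 0 ≤ x (max N1 N2) := hmono.monotone (Nat.zero_le _)
    linarith
  obtain ⟨j, hj⟩ := Nat.exists_eq_succ_of_ne_zero hf2
  have hj2 : x k - 1 < x (j+1) := by have := Nat.find_spec hex2; rwa [hj] at this
  have hju : x j ≤ x k - 1 :=
    not_lt.1 (Nat.find_min hex2 (show j < Nat.find hex2 by rw [hj]; exact Nat.lt_succ_self j))
  have huge : x k - 1 - C2 < x j := by have := hstep j; linarith
  have hNj : max N1 N2 ≤ j := by
    have h1 : x (max N1 N2) < x (j+1) := by linarith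
    exact Nat.lt_succ_iff.1 (hmono.lt_iff_lt.1 h1)
  have huT : T0 ≤ x j :=
    le_trans (le_trans (le_max_left T0 x0) hxN) (hmono.monotone hNj)
  have hup : x j < x k := by linarith
  have hpu1 : (1:ℝ) ≤ x k - x j := by linarith
  -- locate m above
  have hex3 : ∃ i, x (k+1) + 1 ≤ x i := hux (x (k+1) + 1)
  have hf3 : Nat.find hex3 ≠ 0 := by
    intro h
    have h0 := Nat.find_spec hex3
    rw [h] at h0
    have h1 : x 0 ≤ x k := hmono.monotone (Nat.zero_le k)
    linarith
  obtain ⟨m, hm⟩ := Nat.exists_eq_succ_of_ne_zero hf3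
  have hv1 : x (k+1) + 1 ≤ x (m+1) := by have := Nat.find_spec hex3; rwa [hm] at this
  have hvm : x m < x (k+1) + 1 :=
    not_le.1 (Nat.find_min hex3 (show m < Nat.find hex3 by rw [hm]; exact Nat.lt_succ_self m))
  have hvle : x (m+1) < x (k+1) + 1 + C2 := by have := hstep m; linarith
  have hqv : x (k+1) < x (m+1) := by linarith
  have hvq1 : (1:ℝ) ≤ x (m+1) - x (k+1) := by linarith
  have hkm : k + 1 < m + 1 := hmono.lt_iff_lt.1 (by linarith)
  -- A-B bounds at the four points
  have hN1N : N1 ≤ max N1 N2 := le_max_left _ _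
  have hABp := abs_le.1 (hN1 k (by omega))
  have hABq := abs_le.1 (hN1 (k+1) (by omega))
  have hABu := abs_le.1 (hN1 j (by omega))
  have hABv := abs_le.1 (hN1 (m+1) (by omega))
  -- memberships
  have hpmem := hx0 k
  have hqmem := hx0 (k+1)
  have humem := hx0 j
  have hvmem := hx0 (m+1)
  have htmem : t ∈ Set.Ici x0 := Set.mem_Ici.2 (le_trans hpmem hpt)
  have hpT : T0 ≤ x k := by
    have h1 : T0 ≤ x (max N1 N2) := le_trans (le_max_left T0 x0) hxN
    linarith
  -- derivative increment bounds
  have hstepk := hstep k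
  have hDpq : deriv B (x (k+1)) - deriv B (x k) ≤ (n:ℝ) * C1 :=
    hinc (x k) (x (k+1)) hpT hpmem hpq.le (by linarith)
  have hDpq0 : 0 ≤ deriv B (x (k+1)) - deriv B (x k) :=
    sub_nonneg.2 (hmonoD hpmem hqmem hpq.le)
  have hDuv : deriv B (x (m+1)) - deriv B (x j) ≤ (n:ℝ) * C1 :=
    hinc (x j) (x (m+1)) huT humem (by linarith) (by linarith)
  -- slope bounds for A
  have hpu0 : (0:ℝ) < x k - x j := by linarith
  have hvq0 : (0:ℝ) < x (m+1) - x (k+1) := by linarith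
  have hBup : deriv B (x j) * (x k - x j) ≤ B (x k) - B (x j) := by
    have h1 := hB.deriv_le_slope humem hpmem hup (hBdiff _ humem)
    rw [slope_def_field] at h1
    have h2 := mul_le_mul_of_nonneg_right h1 hpu0.le
    rwa [div_mul_cancel₀ _ hpu0.ne'] at h2
  have hBqv : B (x (m+1)) - B (x (k+1)) ≤ deriv B (x (m+1)) * (x (m+1) - x (k+1)) := by
    have h1 := hB.slope_le_deriv hqmem hvmem hqv (hBdiff _ hvmem)
    rw [slope_def_field] at h1
    have h2 := mul_le_mul_of_nonneg_right h1 hvq0.le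
    rwa [div_mul_cancel₀ _ hvq0.ne'] at h2
  have hsL : deriv B (x j) - 2*C3 ≤ (A (x k) - A (x j)) / (x k - x j) := by
    rw [le_div_iff₀ hpu0]
    nlinarith [hABp.1, hABu.2, hBup, mul_nonneg hC3 (by linarith : (0:ℝ) ≤ x k - x j - 1)]
  have hsR : (A (x (m+1)) - A (x (k+1))) / (x (m+1) - x (k+1)) ≤ deriv B (x (m+1)) + 2*C3 := by
    rw [div_le_iff₀ hvq0]
    nlinarith [hABq.1, hABv.2, hBqv, mul_nonneg hC3 (by linarith : (0:ℝ) ≤ x (m+1) - x (k+1) - 1)]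
  have hsRL : (A (x (m+1)) - A (x (k+1))) / (x (m+1) - x (k+1))
      - (A (x k) - A (x j)) / (x k - x j) ≤ 4*C3 + (n:ℝ)*C1 := by linarith
  have hsLR0 : (A (x k) - A (x j)) / (x k - x j)
      ≤ (A (x (m+1)) - A (x (k+1))) / (x (m+1) - x (k+1)) := by
    have h1 := hA.slope_mono_adjacent humem hqmem hup hpq
    have h2 := hA.slope_mono_adjacent hpmem hvmem hpq hqv
    linarith
  -- support lines
  have hAtL := tangent_left' hA humem hpmem htmem hup hpt
  have hAtR := tangent_right' hA htmem hqmem hvmem htq.le hqv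
  have hBtL := tangent_deriv hB hBdiff hpmem htmem
  have hBtR := tangent_deriv hB hBdiff hqmem htmem
  -- chord weights
  have ha0 : 0 ≤ (x (k+1) - t) / (x (k+1) - x k) := div_nonneg (by linarith) hΔ.le
  have hb0 : 0 ≤ (t - x k) / (x (k+1) - x k) := div_nonneg (by linarith) hΔ.le
  have hab : (x (k+1) - t) / (x (k+1) - x k) + (t - x k) / (x (k+1) - x k) = 1 := by
    rw [← add_div, div_eq_one_iff_eq hΔ.ne']; ring
  have hpoint : ((x (k+1) - t) / (x (k+1) - x k)) * x k
      + ((t - x k) / (x (k+1) - x k)) * x (k+1) = t := by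
    field_simp
    ring
  have htpb : t - x k = ((t - x k) / (x (k+1) - x k)) * (x (k+1) - x k) :=
    (div_mul_cancel₀ _ hΔ.ne').symm
  have htqa : t - x (k+1) = -(((x (k+1) - t) / (x (k+1) - x k)) * (x (k+1) - x k)) := by
    rw [div_mul_cancel₀ _ hΔ.ne']; ring
  have hchA : A t ≤ ((x (k+1) - t) / (x (k+1) - x k)) * A (x k)
      + ((t - x k) / (x (k+1) - x k)) * A (x (k+1)) := by
    have h := hA.2 hpmem hqmem ha0 hb0 hab
    simp only [smul_eq_mul] at h
    rw [hpoint] at h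
    exact h
  have hchB : B t ≤ ((x (k+1) - t) / (x (k+1) - x k)) * B (x k)
      + ((t - x k) / (x (k+1) - x k)) * B (x (k+1)) := by
    have h := hB.2 hpmem hqmem ha0 hb0 hab
    simp only [smul_eq_mul] at h
    rw [hpoint] at h
    exact h
  -- abbreviations in comments: al = (x(k+1)-t)/Δ, be = (t-x k)/Δ
  have e1 : ((x (k+1) - t) / (x (k+1) - x k)) * (B (x k) + deriv B (x k) * (t - x k))
      + ((t - x k) / (x (k+1) - x k)) * (B (x (k+1)) + deriv B (x (k+1)) * (t - x (k+1)))
      = ((x (k+1) - t) / (x (k+1) - x k)) * B (x k)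
      + ((t - x k) / (x (k+1) - x k)) * B (x (k+1))
      - ((x (k+1) - t) / (x (k+1) - x k)) * ((t - x k) / (x (k+1) - x k)) * (x (k+1) - x k)
        * (deriv B (x (k+1)) - deriv B (x k)) := by
    field_simp
    ring
  have e2 : ((x (k+1) - t) / (x (k+1) - x k))
        * (A (x k) + ((A (x k) - A (x j)) / (x k - x j)) * (t - x k))
      + ((t - x k) / (x (k+1) - x k))
        * (A (x (k+1)) + ((A (x (m+1)) - A (x (k+1))) / (x (m+1) - x (k+1))) * (t - x (k+1)))
      = ((x (k+1) - t) / (x (k+1) - x k)) * A (x k)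
      + ((t - x k) / (x (k+1) - x k)) * A (x (k+1))
      - ((x (k+1) - t) / (x (k+1) - x k)) * ((t - x k) / (x (k+1) - x k)) * (x (k+1) - x k)
        * ((A (x (m+1)) - A (x (k+1))) / (x (m+1) - x (k+1))
           - (A (x k) - A (x j)) / (x k - x j)) := by
    field_simp
    ring
  have hsum1 : ((x (k+1) - t) / (x (k+1) - x k)) * B t
      + ((t - x k) / (x (k+1) - x k)) * B t = B t := by
    rw [← add_mul, hab, one_mul]
  have hsum2 : ((x (k+1) - t) / (x (k+1) - x k)) * A t
      + ((t - x k) / (x (k+1) - x k)) * A t = A t := by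
    rw [← add_mul, hab, one_mul]
  have hBcomb : ((x (k+1) - t) / (x (k+1) - x k)) * B (x k)
      + ((t - x k) / (x (k+1) - x k)) * B (x (k+1))
      - ((x (k+1) - t) / (x (k+1) - x k)) * ((t - x k) / (x (k+1) - x k)) * (x (k+1) - x k)
        * (deriv B (x (k+1)) - deriv B (x k)) ≤ B t := by
    rw [← e1]
    have h1 := mul_le_mul_of_nonneg_left hBtL ha0
    have h2 := mul_le_mul_of_nonneg_left hBtR hb0
    linarith
  have hAcomb : ((x (k+1) - t) / (x (k+1) - x k)) * A (x k)
      + ((t - x k) / (x (k+1) - x k)) * A (x (k+1))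
      - ((x (k+1) - t) / (x (k+1) - x k)) * ((t - x k) / (x (k+1) - x k)) * (x (k+1) - x k)
        * ((A (x (m+1)) - A (x (k+1))) / (x (m+1) - x (k+1))
           - (A (x k) - A (x j)) / (x k - x j)) ≤ A t := by
    rw [← e2]
    have h1 := mul_le_mul_of_nonneg_left hAtL ha0
    have h2 := mul_le_mul_of_nonneg_left hAtR hb0
    linarith
  -- bound the weight product
  have ha1 : (x (k+1) - t) / (x (k+1) - x k) ≤ 1 := by linarith
  have hb1 : (t - x k) / (x (k+1) - x k) ≤ 1 := by linarith
  have habprod : ((x (k+1) - t) / (x (k+1) - x k)) * ((t - x k) / (x (k+1) - x k)) ≤ 1 :=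
    mul_le_one₀ ha1 hb0 hb1
  have habΔ0 : 0 ≤ ((x (k+1) - t) / (x (k+1) - x k)) * ((t - x k) / (x (k+1) - x k))
      * (x (k+1) - x k) := mul_nonneg (mul_nonneg ha0 hb0) hΔ.le
  have habΔC2 : ((x (k+1) - t) / (x (k+1) - x k)) * ((t - x k) / (x (k+1) - x k))
      * (x (k+1) - x k) ≤ C2 :=
    le_trans (mul_le_of_le_one_left hΔ.le habprod) (by linarith only [hstepk])
  have hterm1 : ((x (k+1) - t) / (x (k+1) - x k)) * ((t - x k) / (x (k+1) - x k))
      * (x (k+1) - x k) * (deriv B (x (k+1)) - deriv B (x k))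
      ≤ C2 * (4*C3 + (n:ℝ)*C1) := by
    have h1 : ((x (k+1) - t) / (x (k+1) - x k)) * ((t - x k) / (x (k+1) - x k))
        * (x (k+1) - x k) * (deriv B (x (k+1)) - deriv B (x k)) ≤ C2 * ((n:ℝ)*C1) :=
      mul_le_mul habΔC2 hDpq hDpq0 hC2pos.le
    linarith only [h1, mul_nonneg hC2pos.le hC3]
  have hsdiff0 : 0 ≤ (A (x (m+1)) - A (x (k+1))) / (x (m+1) - x (k+1))
      - (A (x k) - A (x j)) / (x k - x j) := sub_nonneg.2 hsLR0
  have hterm2 : ((x (k+1) - t) / (x (k+1) - x k)) * ((t - x k) / (x (k+1) - x k))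
      * (x (k+1) - x k) * ((A (x (m+1)) - A (x (k+1))) / (x (m+1) - x (k+1))
           - (A (x k) - A (x j)) / (x k - x j))
      ≤ C2 * (4*C3 + (n:ℝ)*C1) :=
    mul_le_mul habΔC2 hsRL hsdiff0 hC2pos.le
  -- final combination
  have hwp1 := mul_le_mul_of_nonneg_left hABp.2 ha0
  have hwq1 := mul_le_mul_of_nonneg_left hABq.2 hb0
  have hwp2 := mul_le_mul_of_nonneg_left (by linarith [hABp.1] : B (x k) - A (x k) ≤ C3) ha0
  have hwq2 := mul_le_mul_of_nonneg_left (by linarith [hABq.1] : B (x (k+1)) - A (x (k+1)) ≤ C3) hb0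
  have hsumC3 : ((x (k+1) - t) / (x (k+1) - x k)) * C3
      + ((t - x k) / (x (k+1) - x k)) * C3 = C3 := by
    rw [← add_mul, hab, one_mul]
  rw [abs_le]
  constructor
  · linarith only [hchB, hAcomb, hterm2, hwp2, hwq2, hsumC3]
  · linarith only [hchA, hBcomb, hterm1, hwp1, hwq1, hsumC3]
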